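/- Let G be a finite simple graph with nonnegative edge costs c_e and nonnegative edge weights x_e such that every odd cycle of G has total weight at least 1. Let F1 = {e : x_e ≥ 1/2} and let G' = G − F1. Let P be a random partition of the vertex set such that, almost surely, d_{x,G'}(u,v) ≤ 1/4 for every pair of vertices u, v in the same cluster, and such that Pr[P(u) ≠ P(v)] ≤ 4D·x_{uv} for every edge uv of G', where D ≥ 0. Let F2 be the (random) set of edges uv of G' with P(u) ≠ P(v). Then G − (F1 ∪ F2) is almost surely bipartite, and the expected total cost satisfies E[ Σ_{e ∈ F1 ∪ F2} c_e ] ≤ (2 + 4D) · Σ_{e ∈ E(G)} c_e x_e. -/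

import Mathlib

open SimpleGraph

/-- The weight of a walk: the sum of the weights of its edges, counted with multiplicity. -/
def walkWeight {V : Type*} {G : SimpleGraph V} (x : Sym2 V → ℝ) {u v : V}
    (p : G.Walk u v) : ℝ :=
  (p.edges.map x).sum

/-- The shortest-path distance between `u` and `v` induced by the edge weights `x`. -/
noncomputable def wdist {V : Type*} (G : SimpleGraph V) (x : Sym2 V → ℝ) (u v : V) : ℝ :=
  sInf {r | ∃ p : G.Walk u v, walkWeight x p = r}

section Aux

variable {V : Type*}

lemma walkWeight_nonneg {G : SimpleGraph V} {x : Sym2 V → ℝ}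
    (hx : ∀ e ∈ G.edgeSet, 0 ≤ x e) {u v : V} (p : G.Walk u v) :
    0 ≤ walkWeight x p := by
  apply List.sum_nonneg
  intro a ha
  obtain ⟨e, he, rfl⟩ := List.mem_map.mp ha
  exact hx e (p.edges_subset_edgeSet he)

lemma walkWeight_cons {G : SimpleGraph V} (x : Sym2 V → ℝ) {u v w : V}
    (h : G.Adj u v) (p : G.Walk v w) :
    walkWeight x (Walk.cons h p) = x s(u, v) + walkWeight x p := by
  simp [walkWeight]

lemma walkWeight_append {G : SimpleGraph V} (x : Sym2 V → ℝ) {u v w : V}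
    (p : G.Walk u v) (q : G.Walk v w) :
    walkWeight x (p.append q) = walkWeight x p + walkWeight x q := by
  simp [walkWeight, Walk.edges_append]

lemma walkWeight_reverse {G : SimpleGraph V} (x : Sym2 V → ℝ) {u v : V}
    (p : G.Walk u v) : walkWeight x p.reverse = walkWeight x p := by
  simp [walkWeight, Walk.edges_reverse, List.map_reverse, List.sum_reverse]

lemma walkWeight_transfer {G H : SimpleGraph V} (x : Sym2 V → ℝ) {u v : V}
    (p : G.Walk u v) (hp : ∀ e ∈ p.edges, e ∈ H.edgeSet) :
    walkWeight x (p.transfer H hp) = walkWeight x p := by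
  simp [walkWeight, Walk.edges_transfer]

/-- A path from `w` to `v` containing the edge `s(v, w)` has length 1. -/
lemma path_edge_length_one {G : SimpleGraph V} {w v : V} (q : G.Walk w v)
    (hq : q.support.Nodup) (he : s(v, w) ∈ q.edges) : q.length = 1 := by
  cases q with
  | nil => simp at he
  | @cons _ b _ h p =>
    rw [Walk.edges_cons, List.mem_cons] at he
    rcases he with he | he
    · have hb : v = b := by
        rw [Sym2.eq_iff] at he
        rcases he with ⟨h1, h2⟩ | ⟨h1, h2⟩
        · exact h1.trans h2
        · exact h1
      subst hb
      cases p with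
      | nil => simp
      | @cons _ c _ h' p' =>
        exfalso
        have hv : v ∈ p'.support := p'.end_mem_support
        rw [Walk.support_cons, List.nodup_cons] at hq
        have h2 := hq.2
        rw [Walk.support_cons, List.nodup_cons] at h2
        exact h2.1 hv
    · exfalso
      have hw : w ∈ p.support := p.snd_mem_support_of_mem_edges he
      rw [Walk.support_cons, List.nodup_cons] at hq
      exact hq.1 hw

/-- Every closed walk of odd length has weight at least 1, given that every odd
cycle has weight at least 1 and weights are nonnegative. -/
lemma odd_closed_walk_weight [DecidableEq V] {G : SimpleGraph V} {x : Sym2 V → ℝ}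
    (hx : ∀ e ∈ G.edgeSet, 0 ≤ x e)
    (hodd : ∀ (v : V) (C : G.Walk v v), C.IsCycle → Odd C.length → 1 ≤ walkWeight x C) :
    ∀ (n : ℕ) (v : V) (p : G.Walk v v), p.length = n → Odd p.length → 1 ≤ walkWeight x p := by
  intro n
  induction n using Nat.strong_induction_on with
  | _ n ih =>
  intro v p hlen hoddp
  by_cases hnd : p.support.tail.Nodup
  · cases p with
    | nil => simp at hoddp
    | @cons _ w _ h q =>
      have hqsup : q.support.Nodup := by simpa using hnd
      have hq : q.IsPath := (Walk.isPath_def q).mpr hqsup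
      by_cases hev : s(v, w) ∈ q.edges
      · exfalso
        have h1 := path_edge_length_one q hqsup hev
        rw [Walk.length_cons, h1] at hoddp
        exact (by decide : ¬ Odd 2) hoddp
      · have hc : (Walk.cons h q).IsCycle := (Walk.cons_isCycle_iff q h).mpr ⟨hq, hev⟩
        exact hodd v _ hc hoddp
  · obtain ⟨u, hdup⟩ := List.exists_duplicate_iff_not_nodup.mpr hnd
    have hu : u ∈ p.support := List.mem_of_mem_tail hdup.mem
    have hperm : (p.rotate u hu).edges.Perm p.edges := (Walk.rotate_edges p u hu).perm
    have hwt : walkWeight x (p.rotate u hu) = walkWeight x p := by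
      unfold walkWeight
      exact (hperm.map x).sum_eq
    have hlen' : (p.rotate u hu).length = n := by
      rw [← hlen, ← Walk.length_edges, ← Walk.length_edges]
      exact hperm.length_eq
    have hcount : 2 ≤ (p.rotate u hu).support.tail.count u := by
      rw [(Walk.support_rotate p u hu).perm.count_eq]
      exact List.duplicate_iff_two_le_count.mp hdup
    have hoddn : Odd n := hlen ▸ hoddp
    rw [← hwt]
    generalize hpr : p.rotate u hu = p' at hlen' hcount
    cases p' with
    | nil =>
      exfalso
      rw [Walk.length_nil] at hlen'
      rw [← hlen'] at hoddn
      simp at hoddn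
    | @cons _ b _ h q =>
      have hcq : 2 ≤ q.support.count u := by simpa using hcount
      have hu2 : u ∈ q.support := List.count_pos_iff.mp (by omega)
      have hspec := q.take_spec hu2
      set t := q.takeUntil u hu2 with ht
      set d := q.dropUntil u hu2 with hd
      have hct : t.support.count u = 1 := q.count_support_takeUntil_eq_one hu2
      have hdne : 1 ≤ d.length := by
        by_contra hcon
        have hd0 : d.length = 0 := by omega
        have : d.support.tail = [] := by
          have := d.support_eq_cons
          have hsl : d.support.length = d.length + 1 := by
            rw [Walk.length_support]
          cases hds : d.support with
          | nil => simp [hds] at this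
          | cons a l =>
            rw [hds] at hsl
            simp only [List.length_cons] at hsl
            have : l.length = 0 := by omega
            simp [List.eq_nil_of_length_eq_zero this]
        have hqc : q.support.count u = t.support.count u + d.support.tail.count u := by
          rw [← hspec, Walk.support_append, List.count_append]
        rw [this] at hqc
        simp [hct] at hqc
        omega
      have hlens : n = (1 + t.length) + d.length := by
        rw [← hlen', Walk.length_cons, ← hspec, Walk.length_append]
        omega
      have hwts : walkWeight x (Walk.cons h q) =
          walkWeight x (Walk.cons h t) + walkWeight x d := by
        rw [walkWeight_cons, ← hspec, walkWeight_append, walkWeight_cons]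
        ring
      have hlc : (Walk.cons h t).length = 1 + t.length := by
        rw [Walk.length_cons]; omega
      rw [hwts]
      rcases Nat.even_or_odd (1 + t.length) with hpar | hpar
      · -- then d odd
        have hoddd : Odd d.length := by
          rcases Nat.even_or_odd d.length with hh | hh
          · exfalso
            have : Even n := by rw [hlens]; exact hpar.add hh
            exact (Nat.not_even_iff_odd.mpr hoddn) this
          · exact hh
        have h1 : 1 ≤ walkWeight x d :=
          ih d.length (by omega) u d rfl hoddd
        have h2 : 0 ≤ walkWeight x (Walk.cons h t) := walkWeight_nonneg hx _
        linarith
      · have h1 : 1 ≤ walkWeight x (Walk.cons h t) :=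
          ih (1 + t.length) (by omega) u (Walk.cons h t) hlc (hlc ▸ hpar)
        have h2 : 0 ≤ walkWeight x d := walkWeight_nonneg hx _
        linarith

lemma zmod2_of_even {m n : ℕ} (h : Even (m + 1 + n)) : (n : ZMod 2) = (m : ZMod 2) + 1 := by
  obtain ⟨k, hk⟩ := h
  have hn : n % 2 = (m + 1) % 2 := by omega
  calc (n : ZMod 2) = ((n % 2 : ℕ) : ZMod 2) := by rw [ZMod.natCast_mod]
    _ = (((m + 1) % 2 : ℕ) : ZMod 2) := by rw [hn]
    _ = ((m + 1 : ℕ) : ZMod 2) := by rw [ZMod.natCast_mod]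
    _ = (m : ZMod 2) + 1 := by push_cast; ring

/-- A graph all of whose closed walks have even length is 2-colorable. -/
lemma colorable_two_of_even_closed_walks (H : SimpleGraph V)
    (hev : ∀ (v : V) (p : H.Walk v v), Even p.length) : H.Colorable 2 := by
  classical
  have key : ∀ {a b : V} (p q : H.Walk a b), (p.length : ZMod 2) = (q.length : ZMod 2) := by
    intro a b p q
    have h1 := hev a (p.append q.reverse)
    rw [Walk.length_append, Walk.length_reverse] at h1
    obtain ⟨k, hk⟩ := h1
    have : p.length % 2 = q.length % 2 := by omega
    calc ((p.length : ℕ) : ZMod 2) = ((p.length % 2 : ℕ) : ZMod 2) := by rw [ZMod.natCast_mod]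
      _ = ((q.length % 2 : ℕ) : ZMod 2) := by rw [this]
      _ = (q.length : ZMod 2) := by rw [ZMod.natCast_mod]
  have hreach : ∀ v : V, H.Reachable (H.connectedComponentMk v).out v := by
    intro v
    apply ConnectedComponent.exact
    exact (H.connectedComponentMk v).out_eq
  let f : V → ZMod 2 := fun v => ((hreach v).some.length : ZMod 2)
  have hcol : ∀ {a b : V}, H.Adj a b → f a ≠ f b := by
    intro a b hadj
    have hcomp : (H.connectedComponentMk a).out = (H.connectedComponentMk b).out := by
      rw [ConnectedComponent.connectedComponentMk_eq_of_adj hadj]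
    have hpar : ∀ (r : V) (pa : H.Walk r a) (pb : H.Walk r b),
        (pb.length : ZMod 2) = (pa.length : ZMod 2) + 1 := by
      intro r pa pb
      have h1 := key pb (pa.concat hadj)
      rw [h1, Walk.length_concat]
      push_cast
      ring
    have hfb : f b = (((hreach b).some.copy hcomp.symm rfl).length : ZMod 2) := by
      show (((hreach b).some).length : ZMod 2) = _
      rw [Walk.length_copy]
    have h2 := hpar _ (hreach a).some ((hreach b).some.copy hcomp.symm rfl)
    rw [← hfb] at h2
    have hfa : f a = (((hreach a).some).length : ZMod 2) := rfl
    rw [← hfa] at h2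
    intro hcon
    have : (1 : ZMod 2) = 0 := by
      have := hcon.trans h2
      exact (left_eq_add.mp this)
    exact one_ne_zero this
  have C : H.Coloring (ZMod 2) := Coloring.mk f (fun hadj => hcol hadj)
  have := C.colorable
  rwa [ZMod.card 2] at this

end Aux

/-- Rounding analysis for `Min-Uncut`: deleting the heavy edges `F1` and the (random)
inter-cluster edges `F2` of a low diameter decomposition leaves a bipartite graph almost
surely, with expected deleted cost at most `(2 + 4D) · Σ c_e x_e`. -/
theorem stmt12 {V : Type*} [Fintype V] [DecidableEq V] (G : SimpleGraph V)
    [DecidableRel G.Adj]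
    (cost x : Sym2 V → ℝ)
    (hcost : ∀ e ∈ G.edgeSet, 0 ≤ cost e) (hx : ∀ e ∈ G.edgeSet, 0 ≤ x e)
    (hodd : ∀ (v : V) (C : G.Walk v v), C.IsCycle → Odd C.length → 1 ≤ walkWeight x C)
    (F1 : Set (Sym2 V)) (hF1 : F1 = {e ∈ G.edgeSet | 1 / 2 ≤ x e})
    (G' : SimpleGraph V) (hG' : G' = G.deleteEdges F1)
    (D : ℝ) (hD : 0 ≤ D)
    (Ω : Type*) [Fintype Ω] (μ : Ω → ℝ) (hμ0 : ∀ ω, 0 ≤ μ ω) (hμ1 : ∑ ω, μ ω = 1)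
    (P : Ω → V → ℕ)
    (hdiam : ∀ ω, 0 < μ ω → ∀ u v, P ω u = P ω v → wdist G' x u v ≤ 1 / 4)
    (hcut : ∀ u v, G'.Adj u v →
      ∑ ω, (if P ω u ≠ P ω v then μ ω else 0) ≤ 4 * D * x s(u, v))
    (F2 : Ω → Set (Sym2 V))
    (hF2 : ∀ ω, F2 ω = {e | e ∈ G'.edgeSet ∧ ∃ u v, e = s(u, v) ∧ P ω u ≠ P ω v}) :
    (∀ ω, 0 < μ ω → (G.deleteEdges (F1 ∪ F2 ω)).Colorable 2) ∧
      ∑ ω, μ ω * ∑ e ∈ G.edgeFinset, Set.indicator (F1 ∪ F2 ω) cost e ≤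
        (2 + 4 * D) * ∑ e ∈ G.edgeFinset, cost e * x e := by
  classical
  classical
  have hG'le : G' ≤ G := by rw [hG']; exact G.deleteEdges_le F1
  constructor
  · intro ω hω
    set Gω := G.deleteEdges (F1 ∪ F2 ω) with hGω
    have hGωle' : Gω ≤ G' := by
      rw [hG', hGω]; exact G.deleteEdges_anti Set.subset_union_left
    apply colorable_two_of_even_closed_walks
    intro v p
    by_contra hodd'
    rw [Nat.not_even_iff_odd] at hodd'
    have hedge : ∀ e ∈ p.edges, e ∈ G.edgeSet ∧ e ∉ F1 ∧ e ∉ F2 ω := by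
      intro e he
      have hmem : e ∈ Gω.edgeSet := p.edges_subset_edgeSet he
      rw [hGω, edgeSet_deleteEdges] at hmem
      exact ⟨hmem.1, fun h1 => hmem.2 (Or.inl h1), fun h2 => hmem.2 (Or.inr h2)⟩
    have hxlt : ∀ e ∈ p.edges, x e < 1 / 2 := by
      intro e he
      obtain ⟨hGe, hF1', _⟩ := hedge e he
      by_contra hc
      exact hF1' (by rw [hF1]; exact ⟨hGe, le_of_not_gt hc⟩)
    have hPadj : ∀ {a b : V}, Gω.Adj a b → P ω a = P ω b := by
      intro a b hab
      by_contra hne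
      have hmem : s(a, b) ∈ Gω.edgeSet := Gω.mem_edgeSet.mpr hab
      rw [hGω, edgeSet_deleteEdges] at hmem
      apply hmem.2
      right
      rw [hF2]
      exact ⟨(edgeSet_mono hGωle') (Gω.mem_edgeSet.mpr hab), a, b, rfl, hne⟩
    have hPsup : ∀ {a b : V} (q : Gω.Walk a b), ∀ u ∈ q.support, P ω u = P ω a := by
      intro a b q
      induction q with
      | nil =>
        intro u hu
        rw [Walk.support_nil, List.mem_singleton] at hu
        rw [hu]
      | @cons a c b hadj q' ih =>
        intro u hu
        rw [Walk.support_cons, List.mem_cons] at hu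
        rcases hu with rfl | hu
        · rfl
        · exact (ih u hu).trans (hPadj hadj).symm
    have hnil : p.edges ≠ [] := by
      intro hnil
      have h0 : p.length = 0 := by rw [← Walk.length_edges, hnil]; rfl
      rw [h0] at hodd'
      exact (by decide : ¬ Odd 0) hodd'
    have hEne : p.edges.toFinset.Nonempty := by
      rw [← List.toFinset_nonempty_iff] at hnil
      exact hnil
    set S := p.edges.toFinset.sup' hEne x with hS
    have hSle : ∀ e ∈ p.edges, x e ≤ S :=
      fun e he => Finset.le_sup' x (List.mem_toFinset.mpr he)
    have hSlt : S < 1 / 2 := by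
      rw [hS, Finset.sup'_lt_iff]
      intro e he
      exact hxlt e (List.mem_toFinset.mp he)
    set ε := (1 / 2 - S) / 4 with hε
    have hεpos : 0 < ε := by rw [hε]; linarith
    have hwalkex : ∀ u ∈ p.support, ∃ q : G'.Walk v u, walkWeight x q < 1 / 4 + ε := by
      intro u hu
      have hsub : ∀ e ∈ (p.takeUntil u hu).edges, e ∈ G'.edgeSet := by
        intro e he
        exact edgeSet_mono hGωle' ((p.takeUntil u hu).edges_subset_edgeSet he)
      have hne' : {r | ∃ q : G'.Walk v u, walkWeight x q = r}.Nonempty :=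
        ⟨_, (p.takeUntil u hu).transfer G' hsub, rfl⟩
      have hlt : sInf {r | ∃ q : G'.Walk v u, walkWeight x q = r} < 1 / 4 + ε := by
        have h1 : wdist G' x v u ≤ 1 / 4 := hdiam ω hω v u (hPsup p u hu).symm
        calc sInf {r | ∃ q : G'.Walk v u, walkWeight x q = r} = wdist G' x v u := rfl
          _ ≤ 1 / 4 := h1
          _ < 1 / 4 + ε := by linarith
      obtain ⟨r, ⟨q, rfl⟩, hr⟩ := exists_lt_of_csInf_lt hne' hlt
      exact ⟨q, hr⟩
    set f : V → ZMod 2 := fun u =>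
      if h : ∃ q : G'.Walk v u, walkWeight x q < 1 / 4 + ε
      then ((Classical.choose h).length : ZMod 2) else 0 with hf
    have hstep : ∀ a b : V, Gω.Adj a b → a ∈ p.support → b ∈ p.support →
        s(a, b) ∈ p.edges → f b = f a + 1 := by
      intro a b hadj ha hb he
      have hea := hwalkex a ha
      have heb := hwalkex b hb
      have hqa := Classical.choose_spec hea
      have hqb := Classical.choose_spec heb
      set qa := Classical.choose hea with hqa'
      set qb := Classical.choose heb with hqb'
      have hab' : G'.Adj a b := hGωle' hadj
      set W : G'.Walk v v := qa.append (Walk.cons hab' qb.reverse) with hW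
      have hWlen : W.length = qa.length + (qb.length + 1) := by
        rw [hW, Walk.length_append, Walk.length_cons, Walk.length_reverse]
      have hWwt : walkWeight x W = walkWeight x qa + (x s(a, b) + walkWeight x qb) := by
        rw [hW, walkWeight_append, walkWeight_cons, walkWeight_reverse]
      have hWlt : walkWeight x W < 1 := by
        have h3 := hSle _ he
        rw [hWwt]
        rw [hε] at hqa hqb
        linarith
      have hsubG : ∀ e ∈ W.edges, e ∈ G.edgeSet :=
        fun e he' => edgeSet_mono hG'le (W.edges_subset_edgeSet he')
      have hWeven : Even W.length := by
        by_contra hoddW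
        rw [Nat.not_even_iff_odd] at hoddW
        have hodd2 : Odd (W.transfer G hsubG).length := by
          rwa [Walk.length_transfer]
        have h1 := odd_closed_walk_weight hx hodd (W.transfer G hsubG).length v
          (W.transfer G hsubG) rfl hodd2
        rw [walkWeight_transfer] at h1
        linarith
      have heven : Even (qa.length + 1 + qb.length) := by
        obtain ⟨k, hk⟩ := hWeven
        rw [hWlen] at hk
        exact ⟨k, by omega⟩
      have hz := zmod2_of_even heven
      have hfa : f a = (qa.length : ZMod 2) := by rw [hf]; exact dif_pos hea
      have hfb : f b = (qb.length : ZMod 2) := by rw [hf]; exact dif_pos heb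
      rw [hfa, hfb, hz]
    have hchain : ∀ (a b : V) (q : Gω.Walk a b), (∀ e ∈ q.edges, e ∈ p.edges) →
        (∀ u ∈ q.support, u ∈ p.support) → f b = f a + (q.length : ZMod 2) := by
      intro a b q
      induction q with
      | nil => intro _ _; simp
      | @cons a c b hadj q' ih =>
        intro hesub hssub
        have h1 : f c = f a + 1 :=
          hstep a c hadj (hssub a (Walk.start_mem_support _))
            (hssub c (by rw [Walk.support_cons]; exact List.mem_cons_of_mem _ q'.start_mem_support))
            (hesub s(a, c) (by rw [Walk.edges_cons]; exact List.mem_cons_self))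
        have h2 := ih (fun e he => hesub e (by rw [Walk.edges_cons]; exact List.mem_cons_of_mem _ he))
          (fun u hu => hssub u (by rw [Walk.support_cons]; exact List.mem_cons_of_mem _ hu))
        rw [Walk.length_cons, h2, h1]
        push_cast
        ring
    have hfin := hchain v v p (fun e he => he) (fun u hu => hu)
    have hz : ((p.length : ℕ) : ZMod 2) = 0 := (left_eq_add.mp hfin)
    rw [ZMod.natCast_eq_zero_iff] at hz
    have : Even p.length := (even_iff_two_dvd).mpr hz
    exact (Nat.not_even_iff_odd.mpr hodd') this
  · -- expectation bound
    have hstep1 : ∀ ω, ∀ e ∈ G.edgeFinset,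
        Set.indicator (F1 ∪ F2 ω) cost e ≤
          Set.indicator F1 cost e + Set.indicator (F2 ω) cost e := by
      intro ω e he
      have hc : 0 ≤ cost e := hcost e (mem_edgeFinset.mp he)
      by_cases h1 : e ∈ F1
      · rw [Set.indicator_of_mem (Set.mem_union_left _ h1), Set.indicator_of_mem h1]
        have h2 : 0 ≤ Set.indicator (F2 ω) cost e := Set.indicator_apply_nonneg (fun _ => hc)
        linarith
      · by_cases h2 : e ∈ F2 ω
        · rw [Set.indicator_of_mem (Set.mem_union_right _ h2), Set.indicator_of_notMem h1,
            Set.indicator_of_mem h2]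
          linarith
        · rw [Set.indicator_of_notMem (fun hc' => hc'.elim h1 h2),
            Set.indicator_of_notMem h1, Set.indicator_of_notMem h2]
          linarith
    have hB : ∑ ω, μ ω * ∑ e ∈ G.edgeFinset, Set.indicator (F2 ω) cost e ≤
        ∑ e ∈ G.edgeFinset, (4 * D) * (cost e * x e) := by
      have hswap : ∑ ω, μ ω * ∑ e ∈ G.edgeFinset, Set.indicator (F2 ω) cost e =
          ∑ e ∈ G.edgeFinset, ∑ ω, μ ω * Set.indicator (F2 ω) cost e := by
        rw [Finset.sum_comm]
        apply Finset.sum_congr rfl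
        intro ω _
        rw [Finset.mul_sum]
      rw [hswap]
      apply Finset.sum_le_sum
      intro e he
      revert he
      induction e using Sym2.ind with
      | _ u w =>
      intro he
      have heG : s(u, w) ∈ G.edgeSet := mem_edgeFinset.mp he
      have hcuw : 0 ≤ cost s(u, w) := hcost _ heG
      have hxuw : 0 ≤ x s(u, w) := hx _ heG
      by_cases hmem : s(u, w) ∈ G'.edgeSet
      · have hadj : G'.Adj u w := G'.mem_edgeSet.mp hmem
        have hind : ∀ ω, Set.indicator (F2 ω) cost s(u, w) =
            if P ω u ≠ P ω w then cost s(u, w) else 0 := by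
          intro ω
          by_cases hPuw : P ω u ≠ P ω w
          · rw [if_pos hPuw, Set.indicator_of_mem]
            rw [hF2]
            exact ⟨hmem, u, w, rfl, hPuw⟩
          · rw [if_neg hPuw]
            push_neg at hPuw
            apply Set.indicator_of_notMem
            rw [hF2]
            rintro ⟨-, u', w', heq, hne⟩
            rw [Sym2.eq_iff] at heq
            rcases heq with ⟨h1, h2⟩ | ⟨h1, h2⟩
            · exact hne (h1 ▸ h2 ▸ hPuw)
            · exact hne (h2 ▸ h1 ▸ hPuw.symm)
        calc ∑ ω, μ ω * Set.indicator (F2 ω) cost s(u, w)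
            = ∑ ω, (if P ω u ≠ P ω w then μ ω else 0) * cost s(u, w) := by
              apply Finset.sum_congr rfl
              intro ω _
              rw [hind]
              split_ifs <;> ring
          _ = (∑ ω, if P ω u ≠ P ω w then μ ω else 0) * cost s(u, w) := by
              rw [Finset.sum_mul]
          _ ≤ (4 * D * x s(u, w)) * cost s(u, w) :=
              mul_le_mul_of_nonneg_right (hcut u w hadj) hcuw
          _ = (4 * D) * (cost s(u, w) * x s(u, w)) := by ring
      · have hind0 : ∀ ω, Set.indicator (F2 ω) cost s(u, w) = 0 := by
          intro ω
          apply Set.indicator_of_notMem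
          rw [hF2]
          rintro ⟨hmem', -⟩
          exact hmem hmem'
        simp only [hind0, mul_zero, Finset.sum_const_zero]
        positivity
    have hA : ∑ e ∈ G.edgeFinset, Set.indicator F1 cost e ≤
        ∑ e ∈ G.edgeFinset, 2 * (cost e * x e) := by
      apply Finset.sum_le_sum
      intro e he
      have heG : e ∈ G.edgeSet := mem_edgeFinset.mp he
      have hc : 0 ≤ cost e := hcost e heG
      have hx' : 0 ≤ x e := hx e heG
      by_cases h1 : e ∈ F1
      · rw [Set.indicator_of_mem h1]
        have hxe : 1 / 2 ≤ x e := by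
          rw [hF1] at h1
          exact h1.2
        nlinarith
      · rw [Set.indicator_of_notMem h1]
        positivity
    calc ∑ ω, μ ω * ∑ e ∈ G.edgeFinset, Set.indicator (F1 ∪ F2 ω) cost e
        ≤ ∑ ω, μ ω * (∑ e ∈ G.edgeFinset, Set.indicator F1 cost e +
            ∑ e ∈ G.edgeFinset, Set.indicator (F2 ω) cost e) := by
          apply Finset.sum_le_sum
          intro ω _
          apply mul_le_mul_of_nonneg_left _ (hμ0 ω)
          rw [← Finset.sum_add_distrib]
          exact Finset.sum_le_sum (hstep1 ω)
      _ = (∑ ω, μ ω) * (∑ e ∈ G.edgeFinset, Set.indicator F1 cost e) +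
          ∑ ω, μ ω * ∑ e ∈ G.edgeFinset, Set.indicator (F2 ω) cost e := by
          rw [Finset.sum_mul]
          rw [← Finset.sum_add_distrib]
          apply Finset.sum_congr rfl
          intro ω _
          ring
      _ ≤ ∑ e ∈ G.edgeFinset, 2 * (cost e * x e) +
          ∑ e ∈ G.edgeFinset, (4 * D) * (cost e * x e) := by
          rw [hμ1, one_mul]
          exact add_le_add hA hB
      _ = (2 + 4 * D) * ∑ e ∈ G.edgeFinset, cost e * x e := by
          rw [← Finset.sum_add_distrib, Finset.mul_sum]
          apply Finset.sum_congr rfl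
          intro e _
          ring
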